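/- For every natural number n ≥ 1 and every 0 ≤ k ≤ n−1, the set of points x ∈ |L^n_{k+1}| at which f is not locally affine relative to |L^n_{k+1}| (that is, there is no set U that is open in the subspace topology of |L^n_{k+1}|, contains x, and admits an affine map g : ℝ^n → ℝ with f = g on U) is exactly |L^n_k|. This is the support-level statement of the divisor relation max(0, x_1, …, x_n) · L^n_{k+1} = L^n_k. -/

import Mathlib

open Finset

/-- The generator `-e_i` of the fan, for `i ∈ {0,1,…,n}`:
for `i = 0` it is `-e_0 = e_1 + ⋯ + e_n`, and for `i ≥ 1` it is `-e_i`. -/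
def negE (n : ℕ) (i : Fin (n + 1)) : Fin n → ℝ :=
  fun j => if (i : ℕ) = 0 then 1 else if (j : ℕ) + 1 = (i : ℕ) then -1 else 0

/-- The cone `σ_I`: all nonnegative combinations of the vectors `-e_i`, `i ∈ I`. -/
def sigmaCone (n : ℕ) (I : Finset (Fin (n + 1))) : Set (Fin n → ℝ) :=
  { x | ∃ lam : Fin (n + 1) → ℝ, (∀ i, 0 ≤ lam i) ∧ x = ∑ i ∈ I, lam i • negE n i }

/-- The relative interior of `σ_I`: combinations with strictly positive coefficients. -/
def relintCone (n : ℕ) (I : Finset (Fin (n + 1))) : Set (Fin n → ℝ) :=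
  { x | ∃ lam : Fin (n + 1) → ℝ, (∀ i ∈ I, 0 < lam i) ∧ x = ∑ i ∈ I, lam i • negE n i }

/-- The support `|L^n_k|`: the union of the cones `σ_I` over proper subsets
`I ⊊ {0,1,…,n}` with `|I| ≤ k`. -/
def suppL (n k : ℕ) : Set (Fin n → ℝ) :=
  ⋃ I ∈ { I : Finset (Fin (n + 1)) | I ≠ Finset.univ ∧ I.card ≤ k }, sigmaCone n I

/-- The `j`-th extended coordinate of `x`, for `j ∈ {0,1,…,n}`, with `x_0 := 0`. -/
def coordX {n : ℕ} (x : Fin n → ℝ) (j : Fin (n + 1)) : ℝ :=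
  if h : (j : ℕ) = 0 then 0 else x ⟨(j : ℕ) - 1, by have := j.isLt; omega⟩

/-- The tropical polynomial `f(x) = max(0, x_1, …, x_n)`. -/
def tropF {n : ℕ} (x : Fin n → ℝ) : ℝ :=
  (Finset.univ : Finset (Fin (n + 1))).sup' Finset.univ_nonempty (coordX x)

section Aux

variable {n : ℕ}

lemma coordX_zero (x : Fin n → ℝ) : coordX x 0 = 0 := rfl

lemma coordX_succ (x : Fin n → ℝ) (m : Fin n) : coordX x m.succ = x m := by
  have h : ((m.succ : Fin (n + 1)) : ℕ) ≠ 0 := by simp [Fin.val_succ]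
  rw [coordX, dif_neg h]
  congr 1

lemma exists_succ_eq (j : Fin (n + 1)) (hj : j ≠ 0) : ∃ m : Fin n, m.succ = j := by
  have h0 : (j : ℕ) ≠ 0 := by
    intro h; exact hj (Fin.ext (by simp [h]))
  refine ⟨⟨(j : ℕ) - 1, by have := j.isLt; omega⟩, ?_⟩
  exact Fin.ext (by simp [Fin.val_succ]; omega)

lemma sum_coord (I : Finset (Fin (n + 1))) (lam : Fin (n + 1) → ℝ) (m : Fin n) :
    (∑ i ∈ I, lam i • negE n i) m
      = (if (0 : Fin (n + 1)) ∈ I then lam 0 else 0)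
        - (if m.succ ∈ I then lam m.succ else 0) := by
  classical
  have key : ∀ i ∈ I, (lam i • negE n i) m
      = (if i = (0 : Fin (n + 1)) then lam 0 else 0)
        + (if i = m.succ then -(lam m.succ) else 0) := by
    intro i _
    by_cases h0 : i = 0
    · subst h0
      have hms : (0 : Fin (n + 1)) ≠ m.succ := (Fin.succ_ne_zero m).symm
      simp [negE, if_neg hms]
    · have hv0 : (i : ℕ) ≠ 0 := by
        intro h; exact h0 (Fin.ext (by simp [h]))
      by_cases hms : i = m.succ
      · subst hms
        simp [negE, hv0, Fin.val_succ, Fin.succ_ne_zero]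
      · have : (m : ℕ) + 1 ≠ (i : ℕ) := by
          intro h
          apply hms
          ext
          simp [Fin.val_succ, h]
        simp [negE, hv0, this, h0, hms]
  rw [Finset.sum_apply, Finset.sum_congr rfl key, Finset.sum_add_distrib,
    Finset.sum_ite_eq' I (0 : Fin (n + 1)) (fun _ => lam 0),
    Finset.sum_ite_eq' I m.succ (fun _ => -(lam m.succ))]
  by_cases h1 : (0 : Fin (n + 1)) ∈ I <;> by_cases h2 : m.succ ∈ I <;>
    simp [h1, h2] <;> ring

lemma coordX_le_tropF (x : Fin n → ℝ) (j : Fin (n + 1)) : coordX x j ≤ tropF x :=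
  Finset.le_sup' (coordX x) (Finset.mem_univ j)

lemma tropF_formula (I : Finset (Fin (n + 1))) (hI : I ≠ Finset.univ)
    (lam : Fin (n + 1) → ℝ) (h0 : ∀ i, 0 ≤ lam i) :
    tropF (∑ i ∈ I, lam i • negE n i)
      = if (0 : Fin (n + 1)) ∈ I then lam 0 else 0 := by
  classical
  have ha0 : 0 ≤ (if (0 : Fin (n + 1)) ∈ I then lam 0 else 0) := by
    split
    · exact h0 0
    · exact le_refl 0
  have hub : ∀ j : Fin (n + 1), coordX (∑ i ∈ I, lam i • negE n i) j
      ≤ (if (0 : Fin (n + 1)) ∈ I then lam 0 else 0) := by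
    intro j
    by_cases hj : j = 0
    · subst hj; rw [coordX_zero]; exact ha0
    · obtain ⟨m, rfl⟩ := exists_succ_eq j hj
      rw [coordX_succ, sum_coord]
      have h4 : 0 ≤ (if m.succ ∈ I then lam m.succ else 0) := by
        split
        · exact h0 _
        · exact le_refl 0
      linarith
  have hattain : ∃ j : Fin (n + 1), coordX (∑ i ∈ I, lam i • negE n i) j
      = (if (0 : Fin (n + 1)) ∈ I then lam 0 else 0) := by
    by_cases h0I : (0 : Fin (n + 1)) ∈ I
    · obtain ⟨j, hjI⟩ : ∃ j, j ∉ I := by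
        by_contra h
        push_neg at h
        exact hI (Finset.eq_univ_iff_forall.2 h)
      have hj0 : j ≠ 0 := fun h => hjI (h ▸ h0I)
      obtain ⟨m, rfl⟩ := exists_succ_eq j hj0
      exact ⟨m.succ, by rw [coordX_succ, sum_coord, if_neg hjI, sub_zero]⟩
    · exact ⟨0, by rw [coordX_zero, if_neg h0I]⟩
  obtain ⟨j, hj⟩ := hattain
  refine le_antisymm ?_ ?_
  · exact Finset.sup'_le _ _ fun j _ => hub j
  · rw [← hj]; exact Finset.le_sup' _ (Finset.mem_univ j)

lemma mem_sigma_iff (I : Finset (Fin (n + 1))) (hI : I ≠ Finset.univ) (x : Fin n → ℝ) :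
    x ∈ sigmaCone n I ↔
      (∀ m : Fin n, m.succ ∉ I → x m = tropF x) ∧
        ((0 : Fin (n + 1)) ∉ I → tropF x = 0) := by
  classical
  constructor
  · rintro ⟨lam, hlam, rfl⟩
    have hT := tropF_formula I hI lam hlam
    constructor
    · intro m hm
      rw [sum_coord, if_neg hm, sub_zero, hT]
    · intro h0
      rw [hT, if_neg h0]
  · rintro ⟨h1, h2⟩
    refine ⟨fun i => tropF x - coordX x i, fun i => sub_nonneg.2 (coordX_le_tropF x i), ?_⟩
    funext m
    rw [sum_coord]
    have e0 : tropF x - coordX x (0 : Fin (n + 1)) = tropF x := by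
      rw [coordX_zero, sub_zero]
    have em : tropF x - coordX x m.succ = tropF x - x m := by rw [coordX_succ]
    by_cases h0I : (0 : Fin (n + 1)) ∈ I <;> by_cases hmI : m.succ ∈ I
    · rw [if_pos h0I, if_pos hmI, e0, em]; ring
    · rw [if_pos h0I, if_neg hmI, e0, sub_zero, h1 m hmI]
    · rw [if_neg h0I, if_pos hmI, em, h2 h0I]; ring
    · rw [if_neg h0I, if_neg hmI, h1 m hmI, h2 h0I]; ring

lemma continuous_tropF : Continuous (tropF : (Fin n → ℝ) → ℝ) := by
  have hc : ∀ j : Fin (n + 1), Continuous fun x : Fin n → ℝ => coordX x j := by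
    intro j
    by_cases hj : (j : ℕ) = 0
    · simp only [coordX, dif_pos hj]
      exact continuous_const
    · simp only [coordX, dif_neg hj]
      exact continuous_apply _
  exact Continuous.finset_sup'_apply _ fun j _ => hc j

lemma isClosed_sigma (I : Finset (Fin (n + 1))) (hI : I ≠ Finset.univ) :
    IsClosed (sigmaCone n I) := by
  classical
  have heq : sigmaCone n I =
      (⋂ m : Fin n, {x : Fin n → ℝ | m.succ ∉ I → x m = tropF x}) ∩
        {x : Fin n → ℝ | (0 : Fin (n + 1)) ∉ I → tropF x = 0} := by
    ext x
    rw [Set.mem_inter_iff, Set.mem_iInter]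
    exact mem_sigma_iff I hI x
  rw [heq]
  refine IsClosed.inter (isClosed_iInter fun m => ?_) ?_
  · by_cases hm : m.succ ∈ I
    · have : {x : Fin n → ℝ | m.succ ∉ I → x m = tropF x} = Set.univ := by
        ext x; simp [hm]
      rw [this]; exact isClosed_univ
    · have : {x : Fin n → ℝ | m.succ ∉ I → x m = tropF x} = {x | x m = tropF x} := by
        ext x; simp [hm]
      rw [this]; exact isClosed_eq (continuous_apply m) continuous_tropF
  · by_cases h0 : (0 : Fin (n + 1)) ∈ I
    · have : {x : Fin n → ℝ | (0 : Fin (n + 1)) ∉ I → tropF x = 0} = Set.univ := by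
        ext x; simp [h0]
      rw [this]; exact isClosed_univ
    · have : {x : Fin n → ℝ | (0 : Fin (n + 1)) ∉ I → tropF x = 0} = {x | tropF x = 0} := by
        ext x; simp [h0]
      rw [this]; exact isClosed_eq continuous_tropF continuous_const

lemma relint_subset {x : Fin n → ℝ} (J I' : Finset (Fin (n + 1)))
    (hJ : J ≠ Finset.univ) (hI' : I' ≠ Finset.univ)
    (lam : Fin (n + 1) → ℝ) (h0 : ∀ i, 0 ≤ lam i) (hpos : ∀ i ∈ J, 0 < lam i)
    (hx : x = ∑ i ∈ J, lam i • negE n i) (hx' : x ∈ sigmaCone n I') : J ⊆ I' := by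
  have hT : tropF x = if (0 : Fin (n + 1)) ∈ J then lam 0 else 0 := by
    rw [hx]; exact tropF_formula J hJ lam h0
  obtain ⟨h1, h2⟩ := (mem_sigma_iff I' hI' x).1 hx'
  intro j hjJ
  by_contra hjI'
  by_cases hj0 : j = 0
  · subst hj0
    have h3 := h2 hjI'
    rw [hT, if_pos hjJ] at h3
    exact absurd h3 (ne_of_gt (hpos 0 hjJ))
  · obtain ⟨m, rfl⟩ := exists_succ_eq j hj0
    have hxm := h1 m hjI'
    have h4 : x m = (if (0 : Fin (n + 1)) ∈ J then lam 0 else 0) - lam m.succ := by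
      rw [hx, sum_coord, if_pos hjJ]
    rw [hxm, hT] at h4
    have h5 := hpos _ hjJ
    linarith

lemma mem_suppL_iff {k : ℕ} {x : Fin n → ℝ} :
    x ∈ suppL n k ↔
      ∃ I : Finset (Fin (n + 1)),
        (I ≠ Finset.univ ∧ I.card ≤ k) ∧ x ∈ sigmaCone n I := by
  unfold suppL
  constructor
  · intro h
    rcases Set.mem_iUnion₂.1 h with ⟨I, hI, hxI⟩
    exact ⟨I, hI, hxI⟩
  · rintro ⟨I, hI, hxI⟩
    exact Set.mem_iUnion₂.2 ⟨I, hI, hxI⟩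

lemma ne_univ_of_card_le {I : Finset (Fin (n + 1))} (h : I.card ≤ n) :
    I ≠ Finset.univ := by
  intro he
  rw [he, Finset.card_univ, Fintype.card_fin] at h
  omega

lemma exists_relint_rep {x : Fin n → ℝ} {k : ℕ} (hx : x ∈ suppL n k) :
    ∃ (J : Finset (Fin (n + 1))) (lam : Fin (n + 1) → ℝ),
      J ≠ Finset.univ ∧ J.card ≤ k ∧ (∀ i, 0 ≤ lam i) ∧ (∀ i ∈ J, 0 < lam i) ∧
        x = ∑ i ∈ J, lam i • negE n i := by
  classical
  obtain ⟨I, ⟨hIu, hIc⟩, lam, h0, rfl⟩ := mem_suppL_iff.1 hx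
  refine ⟨I.filter (fun i => lam i ≠ 0), lam, ?_, ?_, h0, ?_, ?_⟩
  · intro h
    exact hIu (Finset.univ_subset_iff.1 (h ▸ Finset.filter_subset _ I))
  · exact (Finset.card_filter_le _ _).trans hIc
  · intro i hi
    exact (h0 i).lt_of_ne (Ne.symm (Finset.mem_filter.1 hi).2)
  · exact (Finset.sum_filter_of_ne (s := I) (f := fun i => lam i • negE n i)
      (p := fun i => lam i ≠ 0)
      (fun i _ hne hl => hne (by rw [hl, zero_smul]))).symm

lemma sum_negE_eq_zero : ∑ i : Fin (n + 1), negE n i = 0 := by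
  funext m
  have h := sum_coord Finset.univ (fun _ => (1 : ℝ)) m
  simp only [one_smul] at h
  rw [Finset.sum_apply] at h ⊢
  simpa using h

/-- Shifting a point of a cone along a generator direction. -/
lemma shift_rep (J : Finset (Fin (n + 1))) (hJn : J.card + 1 ≤ n)
    (lam : Fin (n + 1) → ℝ) (h0 : ∀ i', 0 ≤ lam i') (i : Fin (n + 1)) (s : ℝ)
    (hsJ : i ∈ J → 0 ≤ lam i + s) (hsJ' : i ∉ J → 0 ≤ s) :
    ∃ (J' : Finset (Fin (n + 1))) (lam' : Fin (n + 1) → ℝ),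
      J' ≠ Finset.univ ∧ J'.card ≤ J.card + 1 ∧ (∀ i', 0 ≤ lam' i') ∧
      (∑ i' ∈ J, lam i' • negE n i') + s • negE n i = ∑ i' ∈ J', lam' i' • negE n i' ∧
      (if (0 : Fin (n + 1)) ∈ J' then lam' 0 else 0)
        = (if (0 : Fin (n + 1)) ∈ J then lam 0 else 0)
          + s * (if (i : ℕ) = 0 then 1 else 0) := by
  classical
  have hi0iff : ((i : ℕ) = 0) ↔ i = 0 := by
    constructor
    · intro h; exact Fin.ext (by simp [h])
    · intro h; simp [h]
  by_cases hiJ : i ∈ J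
  · refine ⟨J, fun i' => lam i' + if i' = i then s else 0, ?_, ?_, ?_, ?_, ?_⟩
    · exact ne_univ_of_card_le (by omega)
    · omega
    · intro j
      simp only []
      by_cases h : j = i
      · subst h; simpa using hsJ hiJ
      · simpa [h] using h0 j
    · simp only []
      have step : ∀ i' ∈ J, (lam i' + if i' = i then s else 0) • negE n i'
          = lam i' • negE n i' + (if i' = i then s • negE n i' else 0) := by
        intro i' _
        by_cases h : i' = i
        · rw [if_pos h, if_pos h, add_smul]
        · rw [if_neg h, if_neg h, add_zero, add_zero]
      rw [Finset.sum_congr rfl step, Finset.sum_add_distrib,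
        Finset.sum_ite_eq' J i (fun i' => s • negE n i'), if_pos hiJ]
    · simp only []
      by_cases h0J : (0 : Fin (n + 1)) ∈ J
      · rw [if_pos h0J, if_pos h0J]
        by_cases hz : i = 0
        · subst hz; simp
        · rw [if_neg (show (0 : Fin (n + 1)) ≠ i from fun h => hz h.symm),
            if_neg (fun h => hz (hi0iff.1 h))]
          ring
      · have hz : i ≠ 0 := fun h => h0J (h ▸ hiJ)
        rw [if_neg h0J, if_neg h0J, if_neg (fun h => hz (hi0iff.1 h))]
        ring
  · refine ⟨insert i J, fun i' => if i' = i then s else lam i', ?_, ?_, ?_, ?_, ?_⟩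
    · exact ne_univ_of_card_le ((Finset.card_insert_le _ _).trans (by omega))
    · exact Finset.card_insert_le _ _
    · intro j
      simp only []
      by_cases h : j = i
      · rw [if_pos h]; exact hsJ' hiJ
      · rw [if_neg h]; exact h0 j
    · simp only []
      rw [Finset.sum_insert hiJ, if_pos rfl]
      have step : ∀ i' ∈ J, (if i' = i then s else lam i') • negE n i'
          = lam i' • negE n i' := by
        intro i' hi'
        rw [if_neg (fun h => hiJ (by rw [← h]; exact hi'))]
      rw [Finset.sum_congr rfl step, add_comm]
    · simp only []
      by_cases hz : i = 0
      · subst hz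
        rw [if_pos (Finset.mem_insert_self _ _), if_pos rfl, if_neg hiJ]
        simp
      · have h0m : ((0 : Fin (n + 1)) ∈ insert i J) ↔ ((0 : Fin (n + 1)) ∈ J) := by
          rw [Finset.mem_insert]
          constructor
          · rintro (h | h)
            · exact absurd h.symm hz
            · exact h
          · exact Or.inr
        rw [if_neg (fun h => hz (hi0iff.1 h)), mul_zero, add_zero]
        by_cases h0J : (0 : Fin (n + 1)) ∈ J
        · rw [if_pos (h0m.2 h0J), if_pos h0J,
            if_neg (show (0 : Fin (n + 1)) ≠ i from fun h => hz h.symm)]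
        · rw [if_neg (fun h => h0J (h0m.1 h)), if_neg h0J]

end Aux

/-- For `n ≥ 1` and `0 ≤ k ≤ n - 1`, the set of points of
`|L^n_{k+1}|` at which `f` is not locally affine relative to `|L^n_{k+1}|`
(no relatively open neighborhood on which `f` agrees with an affine map)
is exactly `|L^n_k|`: the support-level statement of
`max(0, x_1, …, x_n) · L^n_{k+1} = L^n_k`. -/
theorem tropF_divisor_support (n k : ℕ) (hn : 1 ≤ n) (hk : k ≤ n - 1) :
    { x ∈ suppL n (k + 1) |
      ¬ ∃ (U : Set (Fin n → ℝ)) (g : (Fin n → ℝ) →ᵃ[ℝ] ℝ),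
          (∃ V : Set (Fin n → ℝ), IsOpen V ∧ U = V ∩ suppL n (k + 1)) ∧
          x ∈ U ∧ ∀ y ∈ U, tropF y = g y } = suppL n k := by
  classical
  have hkn : k + 1 ≤ n := by omega
  ext x
  simp only [Set.mem_setOf_eq]
  constructor
  · rintro ⟨hx1, hx2⟩
    by_contra hxk
    apply hx2
    obtain ⟨J, lam, hJu, hJc, h0, hpos, hrep⟩ := exists_relint_rep hx1
    have hJk : ¬ J.card ≤ k := fun h =>
      hxk (mem_suppL_iff.2 ⟨J, ⟨hJu, h⟩, lam, h0, hrep⟩)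
    set T := {I' : Finset (Fin (n + 1)) |
      I' ≠ Finset.univ ∧ I'.card ≤ k + 1 ∧ x ∉ sigmaCone n I'} with hTdef
    set V := (⋃ I' ∈ T, sigmaCone n I')ᶜ with hVdef
    have hVopen : IsOpen V := by
      rw [hVdef, isOpen_compl_iff]
      exact Set.Finite.isClosed_biUnion (Set.toFinite T)
        fun I' hI' => isClosed_sigma I' hI'.1
    have hxV : x ∈ V := by
      rw [hVdef]
      intro hmem
      rcases Set.mem_iUnion₂.1 hmem with ⟨I', hI', hxI'⟩
      exact hI'.2.2 hxI'
    have hkey : ∀ y ∈ V ∩ suppL n (k + 1), y ∈ sigmaCone n J := by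
      rintro y ⟨hyV, hysupp⟩
      obtain ⟨I', ⟨hI'u, hI'c⟩, hyI'⟩ := mem_suppL_iff.1 hysupp
      have hxI' : x ∈ sigmaCone n I' := by
        by_contra hxnot
        exact hyV (Set.mem_iUnion₂.2 ⟨I', ⟨hI'u, hI'c, hxnot⟩, hyI'⟩)
      have hsub : J ⊆ I' := relint_subset J I' hJu hI'u lam h0 hpos hrep hxI'
      have hJI : J = I' := Finset.eq_of_subset_of_card_le hsub (by omega)
      rw [hJI]
      exact hyI'
    by_cases hex : ∃ j : Fin (n + 1), j ∉ J ∧ j ≠ 0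
    · obtain ⟨j, hjJ, hj0⟩ := hex
      obtain ⟨m, rfl⟩ := exists_succ_eq j hj0
      refine ⟨V ∩ suppL n (k + 1),
        (LinearMap.proj m : (Fin n → ℝ) →ₗ[ℝ] ℝ).toAffineMap,
        ⟨V, hVopen, rfl⟩, ⟨hxV, hx1⟩, ?_⟩
      intro y hy
      obtain ⟨mu, hmu0, hyrep⟩ := hkey y hy
      have h1 : tropF y = if (0 : Fin (n + 1)) ∈ J then mu 0 else 0 := by
        rw [hyrep]; exact tropF_formula J hJu mu hmu0
      have h2 : y m = if (0 : Fin (n + 1)) ∈ J then mu 0 else 0 := by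
        rw [hyrep, sum_coord, if_neg hjJ, sub_zero]
      simp only [LinearMap.coe_toAffineMap, LinearMap.proj_apply]
      rw [h1, ← h2]
    · have h0J : (0 : Fin (n + 1)) ∉ J := by
        intro h0J
        apply hJu
        apply Finset.eq_univ_iff_forall.2
        intro j
        by_cases hj : j = 0
        · rwa [hj]
        · by_contra hjJ
          exact hex ⟨j, hjJ, hj⟩
      refine ⟨V ∩ suppL n (k + 1), AffineMap.const ℝ _ (0 : ℝ),
        ⟨V, hVopen, rfl⟩, ⟨hxV, hx1⟩, ?_⟩
      intro y hy
      obtain ⟨mu, hmu0, hyrep⟩ := hkey y hy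
      have h1 : tropF y = 0 := by
        rw [hyrep, tropF_formula J hJu mu hmu0, if_neg h0J]
      simpa using h1
  · intro hxk
    obtain ⟨J, lam, hJu, hJc, h0, hpos, hrep⟩ := exists_relint_rep hxk
    have hsupp1 : x ∈ suppL n (k + 1) :=
      mem_suppL_iff.2 ⟨J, ⟨hJu, by omega⟩, lam, h0, hrep⟩
    refine ⟨hsupp1, ?_⟩
    rintro ⟨U, g, ⟨V, hVopen, rfl⟩, hxU, hfg⟩
    obtain ⟨ε, hε, hball⟩ := Metric.isOpen_iff.1 hVopen x hxU.1
    have ha : tropF x = if (0 : Fin (n + 1)) ∈ J then lam 0 else 0 := by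
      rw [hrep]; exact tropF_formula J hJu lam h0
    have claim : ∀ i : Fin (n + 1),
        g.linear (negE n i) = if (i : ℕ) = 0 then 1 else 0 := by
      intro i
      set v := negE n i with hv
      have hδex : ∃ δ : ℝ, 0 < δ ∧ δ * ‖v‖ < ε ∧ (i ∈ J → δ ≤ lam i) := by
        refine ⟨min (if i ∈ J then lam i else 1) (ε / (‖v‖ + 1)), ?_, ?_, ?_⟩
        · apply lt_min
          · by_cases h : i ∈ J
            · rw [if_pos h]; exact hpos i h
            · rw [if_neg h]; exact one_pos
          · exact div_pos hε (by positivity)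
        · have h1 : min (if i ∈ J then lam i else 1) (ε / (‖v‖ + 1))
              ≤ ε / (‖v‖ + 1) := min_le_right _ _
          have h2 : (0 : ℝ) ≤ ‖v‖ := norm_nonneg v
          have h3 : (0 : ℝ) < ‖v‖ + 1 := by linarith
          calc min (if i ∈ J then lam i else 1) (ε / (‖v‖ + 1)) * ‖v‖
              ≤ (ε / (‖v‖ + 1)) * ‖v‖ := mul_le_mul_of_nonneg_right h1 h2
            _ < ε := by
                rw [div_mul_eq_mul_div, div_lt_iff₀ h3]
                nlinarith
        · intro hiJ
          exact le_trans (min_le_left _ _) (le_of_eq (if_pos hiJ))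
      obtain ⟨δ, hδ, hδε, hδlam⟩ := hδex
      set s : ℝ := if i ∈ J then -δ else δ with hs
      have hs0 : s ≠ 0 := by
        rw [hs]
        split
        · exact neg_ne_zero.2 (ne_of_gt hδ)
        · exact ne_of_gt hδ
      have habs : |s| = δ := by
        rw [hs]
        split
        · rw [abs_neg, abs_of_pos hδ]
        · exact abs_of_pos hδ
      have hyV : x + s • v ∈ V := by
        apply hball
        rw [Metric.mem_ball, dist_eq_norm, add_sub_cancel_left, norm_smul,
          Real.norm_eq_abs, habs]
        exact hδε
      obtain ⟨J', lam', hJ'u, hJ'c, h0', hsum, hcoeff⟩ :=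
        shift_rep J (by omega) lam h0 i s
          (fun hiJ => by
            rw [hs, if_pos hiJ]
            have := hδlam hiJ
            linarith)
          (fun hiJ => by
            rw [hs, if_neg hiJ]
            exact le_of_lt hδ)
      have hyrep : x + s • v = ∑ i' ∈ J', lam' i' • negE n i' := by
        rw [hrep, hv]; exact hsum
      have hysupp : x + s • v ∈ suppL n (k + 1) :=
        mem_suppL_iff.2 ⟨J', ⟨hJ'u, by omega⟩, lam', h0', hyrep⟩
      have hty : tropF (x + s • v)
          = tropF x + s * (if (i : ℕ) = 0 then 1 else 0) := by
        rw [hyrep, tropF_formula J' hJ'u lam' h0', hcoeff, ha]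
      have hgx : (g x : ℝ) = tropF x := (hfg x hxU).symm
      have hgy : (g (x + s • v) : ℝ) = tropF (x + s • v) :=
        (hfg _ ⟨hyV, hysupp⟩).symm
      have haff : (g (x + s • v) : ℝ) = g x + s * g.linear v := by
        have hmv := g.map_vadd x (s • v)
        simp only [vadd_eq_add] at hmv
        rw [add_comm x (s • v), hmv, g.linear.map_smul, smul_eq_mul]
        ring
      have hcancel : s * g.linear v = s * (if (i : ℕ) = 0 then 1 else 0) := by
        have := haff.symm.trans (hgy.trans hty)
        rw [hgx] at this
        linarith
      exact mul_left_cancel₀ hs0 hcancel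
    have hzero : (0 : ℝ) = 1 := by
      have h1 : g.linear (∑ i : Fin (n + 1), negE n i) = 0 := by
        rw [sum_negE_eq_zero, map_zero]
      rw [map_sum] at h1
      have h2 : ∑ i : Fin (n + 1), g.linear (negE n i)
          = ∑ i : Fin (n + 1), (if (i : ℕ) = 0 then (1 : ℝ) else 0) :=
        Finset.sum_congr rfl fun i _ => claim i
      have h3 : ∑ i : Fin (n + 1), (if (i : ℕ) = 0 then (1 : ℝ) else 0) = 1 := by
        have : ∀ i : Fin (n + 1), (if (i : ℕ) = 0 then (1 : ℝ) else 0)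
            = (if i = (0 : Fin (n + 1)) then (1 : ℝ) else 0) := by
          intro i
          by_cases h : i = 0
          · subst h; simp
          · rw [if_neg h, if_neg (fun hh => h (Fin.ext (by simp [hh])))]
        rw [Finset.sum_congr rfl fun i _ => this i,
          Finset.sum_ite_eq' Finset.univ (0 : Fin (n + 1)) (fun _ => (1 : ℝ)),
          if_pos (Finset.mem_univ _)]
      rw [h2, h3] at h1
      linarith
    linarith
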